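/- For every tree T on n ≥ 2 vertices, every redundant locating-dominating set of T has cardinality at least ⌈(2n+2)/3⌉. -/

import Mathlib

open scoped symmDiff

/-- A locating-dominating (LD) set: every non-detector is dominated, and
distinct non-detectors have distinct neighborhood traces on `S`. -/
def IsLDSet {V : Type*} (G : SimpleGraph V) (S : Set V) : Prop :=
  (∀ v ∉ S, (G.neighborSet v ∩ S).Nonempty) ∧
    ∀ u ∉ S, ∀ v ∉ S, u ≠ v → G.neighborSet u ∩ S ≠ G.neighborSet v ∩ S

/-- A redundant locating-dominating (RED:LD) set. -/
def IsRedLDSet {V : Type*} (G : SimpleGraph V) (S : Set V) : Prop :=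
  IsLDSet G S ∧ ∀ v ∈ S, IsLDSet G (S \ {v})

/-- A leaf is a vertex of degree 1. -/
def IsLeaf {V : Type*} (G : SimpleGraph V) (v : V) : Prop :=
  (G.neighborSet v).ncard = 1

/-- A support vertex is a vertex adjacent to a leaf. -/
def IsSupport {V : Type*} (G : SimpleGraph V) (v : V) : Prop :=
  ∃ u, G.Adj v u ∧ IsLeaf G u
theorem stmt12 {V : Type*} [Fintype V] (G : SimpleGraph V) (hT : G.IsTree)
    (hn : 2 ≤ Fintype.card V) (S : Set V) (hS : IsRedLDSet G S) :
    (2 * Fintype.card V + 4) / 3 ≤ S.ncard := by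
  classical
  set n := Fintype.card V with hn'
  set S' : Finset V := S.toFinset with hS'def
  have hScard : S.ncard = S'.card := (Set.ncard_eq_toFinset_card' S)
  have hmem : ∀ v, v ∈ S' ↔ v ∈ S := fun v => Set.mem_toFinset
  -- every non-detector has at least 2 neighbors in S
  have hA : ∀ x ∉ S, 2 ≤ (S' ∩ G.neighborFinset x).card := by
    intro x hx
    obtain ⟨s, hs⟩ := hS.1.1 x hx
    have hsS : s ∈ S := hs.2
    obtain ⟨t, ht⟩ := (hS.2 s hsS).1 x (by simp [hx])
    have htS : t ∈ S := ht.2.1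
    have hts : t ≠ s := ht.2.2
    have hsub : ({t, s} : Finset V) ⊆ S' ∩ G.neighborFinset x := by
      intro y hy
      rcases Finset.mem_insert.mp hy with rfl | hy
      · exact Finset.mem_inter.mpr ⟨(hmem y).mpr htS, by
          simpa [SimpleGraph.mem_neighborFinset] using ht.1⟩
      · rcases Finset.mem_singleton.mp hy with rfl
        exact Finset.mem_inter.mpr ⟨(hmem y).mpr hsS, by
          simpa [SimpleGraph.mem_neighborFinset] using hs.1⟩
    calc 2 = ({t, s} : Finset V).card := by rw [Finset.card_insert_of_notMem (by simpa using hts), Finset.card_singleton]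
    _ ≤ _ := Finset.card_le_card hsub
  -- every detector has at least 1 neighbor in S
  have hB : ∀ s ∈ S, 1 ≤ (S' ∩ G.neighborFinset s).card := by
    intro s hsS
    obtain ⟨t, ht⟩ := (hS.2 s hsS).1 s (by simp)
    refine Finset.card_pos.mpr ⟨t, Finset.mem_inter.mpr ⟨(hmem t).mpr ht.2.1, ?_⟩⟩
    simpa [SimpleGraph.mem_neighborFinset] using ht.1
  -- double-counting identity
  have hsum : ∑ v, (S' ∩ G.neighborFinset v).card = ∑ s ∈ S', G.degree s := by
    have h1 : ∀ v, (S' ∩ G.neighborFinset v).card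
        = ∑ s ∈ S', if G.Adj v s then 1 else 0 := by
      intro v
      rw [show S' ∩ G.neighborFinset v = S'.filter (fun s => G.Adj v s) by
        ext s; simp [SimpleGraph.mem_neighborFinset, and_comm], Finset.card_filter]
    simp_rw [h1]
    rw [Finset.sum_comm]
    refine Finset.sum_congr rfl fun s _ => ?_
    rw [← Finset.card_filter, SimpleGraph.degree]
    congr 1
    ext v
    simp [SimpleGraph.mem_neighborFinset, G.adj_comm]
  -- total degree = 2(n-1)
  have hedge : G.edgeFinset.card + 1 = n := hT.card_edgeFinset
  have hdeg : ∑ v, G.degree v = 2 * G.edgeFinset.card :=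
    SimpleGraph.sum_degrees_eq_twice_card_edges G
  set m := S'ᶜ.card with hm
  have hkm : S'.card + m = n := by
    rw [hm, Finset.card_add_card_compl]
  -- lower bound on ∑_{v ∈ S'} deg v
  have hlow : S'.card + 2 * m ≤ ∑ s ∈ S', G.degree s := by
    rw [← hsum, ← Finset.sum_add_sum_compl S']
    have e1 : S'.card * 1 ≤ ∑ v ∈ S', (S' ∩ G.neighborFinset v).card := by
      rw [mul_one]
      calc S'.card = ∑ _v ∈ S', 1 := by simp
      _ ≤ _ := Finset.sum_le_sum fun v hv => hB v ((hmem v).mp hv)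
    have e2 : m * 2 ≤ ∑ v ∈ S'ᶜ, (S' ∩ G.neighborFinset v).card := by
      calc m * 2 = ∑ _v ∈ S'ᶜ, 2 := by simp [mul_comm, hm]
      _ ≤ _ := Finset.sum_le_sum fun v hv => hA v
        (fun h => (Finset.mem_compl.mp hv) ((hmem v).mpr h))
    omega
  -- lower bound on ∑_{v ∉ S'} deg v
  have hlow2 : 2 * m ≤ ∑ v ∈ S'ᶜ, G.degree v := by
    calc 2 * m = ∑ _v ∈ S'ᶜ, 2 := by simp [mul_comm, hm]
    _ ≤ _ := Finset.sum_le_sum fun v hv => by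
        have h2 := hA v (fun h => (Finset.mem_compl.mp hv) ((hmem v).mpr h))
        have := Finset.card_le_card (Finset.inter_subset_right
          (s₁ := S') (s₂ := G.neighborFinset v))
        rw [SimpleGraph.degree]
        omega
  have hsplit : ∑ s ∈ S', G.degree s + ∑ v ∈ S'ᶜ, G.degree v
      = 2 * G.edgeFinset.card := by
    rw [Finset.sum_add_sum_compl, hdeg]
  rw [hScard]
  omega
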